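/- arXiv:1807.02575 — 7 statements merged into one kernel-verified Lean document; each statement's English description precedes it below -/
import Mathlib

section
/- Let μ be a finite measure on a measurable space, let f : ℝ → ℝ be globally Lipschitz, let φ : ℝ → ℝ be an antiderivative of f, and define Φ(u) := ∫ φ(u(x)) dμ(x) for u ∈ L²(μ). Then for all u, h ∈ L²(μ), the Gâteaux directional derivative of Φ at u in direction h exists and equals ∫ f(u(x))·h(x) dμ(x); that is, the real function t ↦ Φ(u + t·h) is differentiable at t = 0 with derivative ∫ f(u(x))·h(x) dμ(x). -/
open MeasureTheory Metric

/-- Gâteaux differentiability of `Φ(u) = ∫ φ(u x) dμ` on `L²(μ)`: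
the map `t ↦ Φ(u + t h)` is differentiable at `0` with derivative
`∫ f(u x) * h x dμ`. -/
theorem gateaux_derivative_integral_antiderivative
    {α : Type*} [MeasurableSpace α] (μ : Measure α) [IsFiniteMeasure μ]
    (f φ : ℝ → ℝ) (L : ℝ) (hL : 0 ≤ L)
    (hf : ∀ x y : ℝ, |f x - f y| ≤ L * |x - y|)
    (hφ : ∀ r : ℝ, HasDerivAt φ (f r) r)
    (u h : α → ℝ) (hu : MemLp u 2 μ) (hh : MemLp h 2 μ) :
    HasDerivAt (fun t : ℝ => ∫ x, φ (u x + t * h x) ∂μ)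
      (∫ x, f (u x) * h x ∂μ) 0 := by
  -- linear growth of `f`
  have hC : ∀ r : ℝ, |f r| ≤ |f 0| + L * |r| := by
    intro r
    have h1 := hf r 0
    simp only [sub_zero] at h1
    calc |f r| = |f r - f 0 + f 0| := by ring_nf
      _ ≤ |f r - f 0| + |f 0| := abs_add_le _ _
      _ ≤ L * |r| + |f 0| := by linarith
      _ = |f 0| + L * |r| := by ring
  -- continuity of `f` and `φ`
  have hfc : Continuous f := by
    have : LipschitzWith (Real.toNNReal L) f := by
      intro x y
      rw [edist_dist, edist_dist, ← ENNReal.ofReal_coe_nnreal,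
        ← ENNReal.ofReal_mul (by positivity)]
      apply ENNReal.ofReal_le_ofReal
      have := hf x y
      simp only [Real.dist_eq, Real.coe_toNNReal _ hL]
      exact this
    exact this.continuous
  have hφc : Continuous φ := by
    rw [continuous_iff_continuousAt]
    exact fun r => (hφ r).continuousAt
  -- products of L² functions are integrable
  have hmul : ∀ g₁ g₂ : α → ℝ, MemLp g₁ 2 μ → MemLp g₂ 2 μ →
      Integrable (fun x => g₁ x * g₂ x) μ := by
    intro g₁ g₂ h₁ h₂
    have : MemLp (g₁ • g₂) 1 μ := h₂.smul h₁
    simpa [Pi.smul_apply, smul_eq_mul, Pi.mul_def] using this.integrable le_rfl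
  -- growth bound for φ
  have hφgrow : ∀ r : ℝ, |φ r - φ 0| ≤ (|f 0| + L * |r|) * |r| := by
    intro r
    have habs : ∀ y ∈ Set.uIcc (0 : ℝ) r, |y| ≤ |r| := by
      intro y hy
      rcases Set.mem_uIcc.mp hy with ⟨h0, h1⟩ | ⟨h0, h1⟩ <;>
        · rw [abs_le]
          constructor <;> [nlinarith [le_abs_self r, neg_abs_le r];
            nlinarith [le_abs_self r, neg_abs_le r]]
    have key := Convex.norm_image_sub_le_of_norm_hasDerivWithin_le
      (f := φ) (f' := f) (s := Set.uIcc (0 : ℝ) r) (C := |f 0| + L * |r|)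
      (fun y _ => (hφ y).hasDerivWithinAt)
      (fun y hy => by
        have := hC y
        have := habs y hy
        simp only [Real.norm_eq_abs]
        nlinarith)
      (convex_uIcc _ _) Set.left_mem_uIcc Set.right_mem_uIcc
    simpa [Real.norm_eq_abs] using key
  set bound : α → ℝ := fun a => (|f 0| + L * (|u a| + |h a|)) * |h a| with hbdef
  -- measurability facts
  have hum := hu.aestronglyMeasurable
  have hhm := hh.aestronglyMeasurable
  have hF_meas : ∀ t : ℝ, AEStronglyMeasurable (fun x => φ (u x + t * h x)) μ := by
    intro t
    exact hφc.comp_aestronglyMeasurable (hum.add (hhm.const_mul t))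
  have hF'_meas : AEStronglyMeasurable (fun x => f (u x) * h x) μ :=
    (hfc.comp_aestronglyMeasurable hum).mul hhm
  -- integrability of F at 0
  have hF_int : Integrable (fun x => φ (u x + 0 * h x)) μ := by
    simp only [zero_mul, add_zero]
    have hg : Integrable (fun x => |φ 0| + (|f 0| + L * |u x|) * |u x|) μ := by
      refine (integrable_const _).add ?_
      exact hmul (fun x => |f 0| + L * |u x|) (fun x => |u x|) ((memLp_const (|f 0|)).add (hu.abs.const_mul L)) hu.abs
    refine Integrable.mono' hg (hφc.comp_aestronglyMeasurable hum) ?_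
    filter_upwards with x
    have h1 := hφgrow (u x)
    have h2 : |φ (u x)| ≤ |φ 0| + |φ (u x) - φ 0| := by
      calc |φ (u x)| = |φ 0 + (φ (u x) - φ 0)| := by ring_nf
        _ ≤ |φ 0| + |φ (u x) - φ 0| := abs_add_le _ _
    simp only [Real.norm_eq_abs]
    linarith
  -- integrability of the bound
  have hbound_int : Integrable bound μ :=
    hmul (fun a => |f 0| + L * (|u a| + |h a|)) (fun a => |h a|) (((memLp_const (|f 0|)).add (((hu.abs.add hh.abs)).const_mul L))) hh.abs
  -- Lipschitz estimate on the ball of radius 1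
  have h_lip : ∀ a : α, LipschitzOnWith (Real.nnabs (bound a))
      (fun t : ℝ => φ (u a + t * h a)) (ball (0 : ℝ) 1) := by
    intro a
    refine Convex.lipschitzOnWith_of_nnnorm_hasDerivWithin_le
      (f' := fun t => f (u a + t * h a) * h a) (convex_ball _ _) ?_ ?_
    · intro t _
      have inner : HasDerivAt (fun s : ℝ => u a + s * h a) (h a) t := by
        simpa using ((hasDerivAt_id t).mul_const (h a)).const_add (u a)
      exact ((hφ (u a + t * h a)).comp t inner).hasDerivWithinAt
    · intro t ht
      rw [mem_ball, dist_zero_right, Real.norm_eq_abs] at ht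
      rw [← NNReal.coe_le_coe, coe_nnnorm, Real.coe_nnabs, Real.norm_eq_abs]
      have hb_nonneg : 0 ≤ bound a := by positivity
      rw [abs_of_nonneg hb_nonneg, abs_mul, hbdef]
      have h1 := hC (u a + t * h a)
      have h2 : |u a + t * h a| ≤ |u a| + |t| * |h a| := by
        calc |u a + t * h a| ≤ |u a| + |t * h a| := abs_add_le _ _
          _ = |u a| + |t| * |h a| := by rw [abs_mul]
      have h3 : |t| * |h a| ≤ |h a| := by nlinarith [abs_nonneg (h a), abs_nonneg t]
      have h4 : |f (u a + t * h a)| ≤ |f 0| + L * (|u a| + |h a|) := by nlinarith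
      simpa using mul_le_mul_of_nonneg_right h4 (abs_nonneg (h a))
  -- differentiability pointwise
  have h_diff : ∀ a : α, HasDerivAt (fun t : ℝ => φ (u a + t * h a))
      (f (u a) * h a) 0 := by
    intro a
    have inner : HasDerivAt (fun s : ℝ => u a + s * h a) (h a) 0 := by
      simpa using ((hasDerivAt_id (0 : ℝ)).mul_const (h a)).const_add (u a)
    have := (hφ (u a + 0 * h a)).comp 0 inner
    simpa [Function.comp_def] using this
  have key := hasDerivAt_integral_of_dominated_loc_of_lip
    (F := fun t x => φ (u x + t * h x)) (F' := fun x => f (u x) * h x)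
    (bound := bound) (ball_mem_nhds 0 one_pos)
    (Filter.Eventually.of_forall hF_meas) hF_int hF'_meas
    (Filter.Eventually.of_forall h_lip) hbound_int
    (Filter.Eventually.of_forall h_diff)
  exact key.2
end

section
/- Let 0 < A < 1 and s > 1. Then the function ξ ↦ exp(−ξ²/2) − (A·s/√2)·exp(−s²·ξ²/4) is nonnegative on all of ℝ if and only if √2 ≤ s and s ≤ √2/A. -/
/-- The Fourier density of the Mexican hat kernel
`J(x) = exp(−x²/2) − A exp(−x²/s²)` is nonnegative on all of `ℝ`
if and only if `√2 ≤ s ≤ √2 / A`. -/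
theorem mexican_hat_density_nonneg_iff (A s : ℝ) (hA0 : 0 < A) (hA1 : A < 1)
    (hs : 1 < s) :
    (∀ ξ : ℝ, 0 ≤ Real.exp (-ξ ^ 2 / 2) -
        A * s / Real.sqrt 2 * Real.exp (-(s ^ 2 * ξ ^ 2) / 4)) ↔
      (Real.sqrt 2 ≤ s ∧ s ≤ Real.sqrt 2 / A) := by
  have hsqrt2 : (0:ℝ) < Real.sqrt 2 := Real.sqrt_pos.mpr (by norm_num)
  have hsq2 : Real.sqrt 2 ^ 2 = 2 := Real.sq_sqrt (by norm_num)
  have hs0 : (0:ℝ) < s := lt_trans one_pos hs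
  have hc0 : (0:ℝ) < A * s / Real.sqrt 2 := by positivity
  set c : ℝ := A * s / Real.sqrt 2 with hc
  constructor
  · intro h
    constructor
    · by_contra hlt
      push_neg at hlt
      have hs2 : s ^ 2 < 2 := by nlinarith
      set ξ : ℝ := Real.sqrt (4 * (|Real.log c| + 1) / (2 - s ^ 2)) with hξ
      have hd : (0:ℝ) < 2 - s ^ 2 := by linarith
      have hnum : (0:ℝ) ≤ 4 * (|Real.log c| + 1) / (2 - s ^ 2) := by
        have : (0:ℝ) ≤ |Real.log c| := abs_nonneg _
        positivity
      have hξ2 : ξ ^ 2 = 4 * (|Real.log c| + 1) / (2 - s ^ 2) :=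
        Real.sq_sqrt hnum
      have key : -ξ ^ 2 / 2 < Real.log c + -(s ^ 2 * ξ ^ 2) / 4 := by
        have h1 : ξ ^ 2 * (2 - s ^ 2) / 4 = |Real.log c| + 1 := by
          rw [hξ2]; field_simp [hd.ne']
        have h2 : -|Real.log c| ≤ Real.log c := neg_abs_le _
        nlinarith
      have := h ξ
      have hexp : Real.exp (-ξ ^ 2 / 2) <
          c * Real.exp (-(s ^ 2 * ξ ^ 2) / 4) := by
        calc Real.exp (-ξ ^ 2 / 2)
            < Real.exp (Real.log c + -(s ^ 2 * ξ ^ 2) / 4) := Real.exp_lt_exp.mpr key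
          _ = c * Real.exp (-(s ^ 2 * ξ ^ 2) / 4) := by
              rw [Real.exp_add, Real.exp_log hc0]
      linarith
    · have h0 := h 0
      simp at h0
      have hAs : A * s ≤ Real.sqrt 2 := by
        have : c ≤ 1 := by
          by_contra hcon
          push_neg at hcon
          nlinarith
        rw [hc, div_le_one hsqrt2] at this
        exact this
      rw [le_div_iff₀ hA0]
      linarith [hAs, mul_comm A s]
  · rintro ⟨h1, h2⟩ ξ
    have hs2 : 2 ≤ s ^ 2 := by nlinarith
    have hc1 : c ≤ 1 := by
      rw [hc, div_le_one hsqrt2]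
      rw [le_div_iff₀ hA0] at h2
      nlinarith
    have hmono : Real.exp (-(s ^ 2 * ξ ^ 2) / 4) ≤ Real.exp (-ξ ^ 2 / 2) := by
      apply Real.exp_le_exp.mpr
      nlinarith [sq_nonneg ξ]
    have : c * Real.exp (-(s ^ 2 * ξ ^ 2) / 4) ≤ 1 * Real.exp (-ξ ^ 2 / 2) := by
      apply mul_le_mul hc1 hmono (Real.exp_nonneg _) zero_le_one
    linarith
end

section
/- Let γ₁ > γ₂ > 0 and 0 < Γ ≤ γ₂/γ₁. Then the kernel (x, y) ↦ J(x − y) with J(z) = exp(−γ₁|z|) − Γ·exp(−γ₂|z|) is nonnegative definite: for every n ∈ ℕ, all points x₁, …, xₙ ∈ ℝ and all real coefficients c₁, …, cₙ, one has ∑_{i,j=1}^n c_i·c_j·[exp(−γ₁·|x_i − x_j|) − Γ·exp(−γ₂·|x_i − x_j|)] ≥ 0. -/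
open MeasureTheory Real Filter Set Complex
open scoped FourierTransform

lemma integrableOn_cexp_Ioi {c : ℂ} (hc : c.re < 0) :
    IntegrableOn (fun x : ℝ ↦ Complex.exp (c * x)) (Ioi 0) := by
  apply Integrable.mono' (exp_neg_integrableOn_Ioi 0 (b := -c.re) (by linarith))
  · exact (Complex.continuous_exp.comp
      (continuous_const.mul Complex.continuous_ofReal)).aestronglyMeasurable
  · filter_upwards with x
    rw [Complex.norm_exp]
    simp [Complex.mul_re]

lemma integral_cexp_Ioi {c : ℂ} (hc : c.re < 0) :
    ∫ x in Ioi (0 : ℝ), Complex.exp (c * x) = -c⁻¹ := by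
  have hc0 : c ≠ 0 := fun h => by simp [h] at hc
  have hderiv : ∀ x ∈ Ici (0 : ℝ),
      HasDerivAt (fun y : ℝ ↦ Complex.exp (c * y) / c) (Complex.exp (c * x)) x := by
    intro x _
    have h1 : HasDerivAt (fun y : ℝ ↦ (y : ℂ)) 1 x := Complex.ofRealCLM.hasDerivAt
    have h2 : HasDerivAt (fun y : ℝ ↦ c * (y : ℂ)) c x := by simpa using h1.const_mul c
    have h3 := (h2.cexp).div_const c
    simpa [mul_div_assoc, div_self hc0] using h3
  have htend : Tendsto (fun x : ℝ ↦ Complex.exp (c * x) / c) atTop (nhds 0) := by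
    rw [tendsto_zero_iff_norm_tendsto_zero]
    have : (fun x : ℝ ↦ ‖Complex.exp (c * x) / c‖)
        = fun x : ℝ ↦ Real.exp (c.re * x) / ‖c‖ := by
      ext x
      simp [Complex.norm_exp, Complex.mul_re]
    rw [this]
    have : Tendsto (fun x : ℝ ↦ c.re * x) atTop atBot :=
      tendsto_id.const_mul_atTop_of_neg hc
    simpa using (Real.tendsto_exp_atBot.comp this).div_const ‖c‖
  have := integral_Ioi_of_hasDerivAt_of_tendsto' hderiv (integrableOn_cexp_Ioi hc) htend
  simpa [hc0] using this

lemma integrable_exp_neg_mul_abs {γ : ℝ} (hγ : 0 < γ) :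
    Integrable (fun x : ℝ ↦ Real.exp (-γ * |x|)) := by
  have hIoi : IntegrableOn (fun x : ℝ ↦ Real.exp (-γ * |x|)) (Ioi 0) :=
    (exp_neg_integrableOn_Ioi 0 hγ).congr_fun
      (fun x hx => by rw [abs_of_pos hx]) measurableSet_Ioi
  have hIic : IntegrableOn (fun x : ℝ ↦ Real.exp (-γ * |x|)) (Iic 0) := by
    rw [← Measure.map_neg_eq_self (volume : Measure ℝ)]
    have m : MeasurableEmbedding fun x : ℝ => -x :=
      (Homeomorph.neg ℝ).measurableEmbedding
    rw [m.integrableOn_map_iff]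
    simp_rw [Function.comp_def, abs_neg, neg_preimage, neg_Iic, neg_zero]
    exact Iff.mpr integrableOn_Ici_iff_integrableOn_Ioi hIoi
  rw [← integrableOn_univ, ← Iic_union_Ioi (a := (0:ℝ))]
  exact hIic.union hIoi

lemma integrable_spectral {γ : ℝ} (hγ : 0 < γ) :
    Integrable (fun w : ℝ ↦ 2 * γ / (γ ^ 2 + (2 * π * w) ^ 2)) := by
  have h1 : Integrable (fun w : ℝ ↦ (1 + w ^ 2)⁻¹) := integrable_inv_one_add_sq
  have h2 : Integrable (fun w : ℝ ↦ (1 + (2 * π / γ * w) ^ 2)⁻¹) :=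
    h1.comp_mul_left' (by positivity)
  have h3 := h2.const_mul (2 / γ)
  apply h3.congr (ae_of_all _ fun w => ?_)
  have hπ : (0:ℝ) < π := Real.pi_pos
  field_simp

lemma fourier_exp_neg_mul_abs {γ : ℝ} (hγ : 0 < γ) (w : ℝ) :
    𝓕 (fun x : ℝ ↦ (Real.exp (-γ * |x|) : ℂ)) w
      = ((2 * γ / (γ ^ 2 + (2 * π * w) ^ 2) : ℝ) : ℂ) := by
  have hπ := Real.pi_pos
  set F : ℝ → ℂ := fun v ↦ Complex.exp (((-2 * π * v * w : ℝ) : ℂ) * Complex.I)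
      * ((Real.exp (-γ * |v|) : ℝ) : ℂ) with hF
  have hFint : Integrable F := by
    apply ((integrable_exp_neg_mul_abs hγ).ofReal (𝕜 := ℂ)).bdd_mul
    · exact (Complex.continuous_exp.comp
        ((Complex.continuous_ofReal.comp (by continuity)).mul continuous_const)).aestronglyMeasurable
    · exact ae_of_all _ fun x => le_of_eq (Complex.norm_exp_ofReal_mul_I _)
  have hsplit : 𝓕 (fun x : ℝ ↦ (Real.exp (-γ * |x|) : ℂ)) w
      = (∫ v in Iic (0:ℝ), F v) + ∫ v in Ioi (0:ℝ), F v := by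
    rw [Real.fourier_real_eq_integral_exp_smul]
    simp_rw [smul_eq_mul, ← hF]
    rw [← setIntegral_univ, ← Iic_union_Ioi (a := (0:ℝ)),
      setIntegral_union (Iic_disjoint_Ioi le_rfl) measurableSet_Ioi
        hFint.integrableOn hFint.integrableOn]
  set c₁ : ℂ := -(γ:ℂ) - (2*π*w:ℝ) * Complex.I with hc₁
  set c₂ : ℂ := -(γ:ℂ) + (2*π*w:ℝ) * Complex.I with hc₂
  have hc₁re : c₁.re < 0 := by simp [hc₁]; exact hγ
  have hc₂re : c₂.re < 0 := by simp [hc₂]; exact hγ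
  have hIoi : ∫ v in Ioi (0:ℝ), F v = -c₁⁻¹ := by
    rw [setIntegral_congr_fun measurableSet_Ioi
      (g := fun v : ℝ ↦ Complex.exp (c₁ * v)) ?_, integral_cexp_Ioi hc₁re]
    intro v hv
    rw [hF]
    simp only [abs_of_pos (mem_Ioi.mp hv)]
    rw [Complex.ofReal_exp, ← Complex.exp_add]
    congr 1
    rw [hc₁]
    push_cast
    ring
  have hIic : ∫ v in Iic (0:ℝ), F v = -c₂⁻¹ := by
    have heq : ∀ v ∈ Iic (0:ℝ), F v = (fun y : ℝ ↦ Complex.exp (c₂ * y)) (-v) := by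
      intro v hv
      rw [hF]
      simp only [abs_of_nonpos (mem_Iic.mp hv)]
      rw [Complex.ofReal_exp, ← Complex.exp_add]
      congr 1
      rw [hc₂]
      push_cast
      ring
    rw [setIntegral_congr_fun measurableSet_Iic heq]
    have h := integral_comp_neg_Iic (0:ℝ) (fun y : ℝ ↦ Complex.exp (c₂ * y))
    simp only [neg_zero] at h
    rw [h, integral_cexp_Ioi hc₂re]
  rw [hsplit, hIoi, hIic]
  have h1 : -c₁ = (γ:ℂ) + (2*π*w:ℝ) * Complex.I := by rw [hc₁]; ring
  have h2 : -c₂ = (γ:ℂ) - (2*π*w:ℝ) * Complex.I := by rw [hc₂]; ring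
  rw [← inv_neg, ← inv_neg, h1, h2]
  have hd1 : (γ:ℂ) + (2*π*w:ℝ) * Complex.I ≠ 0 := by
    intro h
    have := congrArg Complex.re h
    simp at this
    exact absurd this (ne_of_gt hγ)
  have hd2 : (γ:ℂ) - (2*π*w:ℝ) * Complex.I ≠ 0 := by
    intro h
    have := congrArg Complex.re h
    simp at this
    exact absurd this (ne_of_gt hγ)
  have hd3 : ((γ ^ 2 + (2 * π * w) ^ 2 : ℝ) : ℂ) ≠ 0 := by
    have : (0:ℝ) < γ ^ 2 + (2 * π * w) ^ 2 := by positivity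
    exact_mod_cast ne_of_gt this
  push_cast at hd3
  rw [inv_add_inv hd2 hd1]
  push_cast
  rw [div_eq_div_iff (by push_cast at hd2 hd1; exact mul_ne_zero hd2 hd1) hd3]
  linear_combination (2*(γ:ℂ)*(2*(π:ℂ)*(w:ℂ))^2) * Complex.I_sq

lemma exp_eq_integral_cos {γ : ℝ} (hγ : 0 < γ) (z : ℝ) :
    Real.exp (-γ * |z|)
      = ∫ w : ℝ, 2 * γ / (γ ^ 2 + (2 * π * w) ^ 2) * Real.cos (2 * π * w * z) := by
  set f : ℝ → ℂ := fun x ↦ ((Real.exp (-γ * |x|) : ℝ) : ℂ) with hf_def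
  have hf : Integrable f := (integrable_exp_neg_mul_abs hγ).ofReal
  have hFf : 𝓕 f = fun w : ℝ ↦ ((2 * γ / (γ ^ 2 + (2 * π * w) ^ 2) : ℝ) : ℂ) :=
    funext (fourier_exp_neg_mul_abs hγ)
  have hFint : Integrable (𝓕 f) := by rw [hFf]; exact (integrable_spectral hγ).ofReal
  have hcont : Continuous f :=
    Complex.continuous_ofReal.comp (Real.continuous_exp.comp (continuous_const.mul continuous_abs))
  have hinv := MeasureTheory.Integrable.fourierInv_fourier_eq (v := z) hf hFint hcont.continuousAt
  rw [Real.fourierInv_eq', hFf] at hinv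
  simp only [RCLike.inner_apply, conj_trivial, smul_eq_mul] at hinv
  have e : ∀ v : ℝ, z * v = v * z := fun v => mul_comm z v
  simp only [e] at hinv
  have hGint : Integrable (fun v : ℝ ↦
      Complex.exp (((2 * π * (v * z) : ℝ) : ℂ) * Complex.I)
        * ((2 * γ / (γ ^ 2 + (2 * π * v) ^ 2) : ℝ) : ℂ)) := by
    apply ((integrable_spectral hγ).ofReal (𝕜 := ℂ)).bdd_mul
    · exact (Complex.continuous_exp.comp
        ((Complex.continuous_ofReal.comp (by continuity)).mul continuous_const)).aestronglyMeasurable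
    · exact ae_of_all _ fun x => le_of_eq (Complex.norm_exp_ofReal_mul_I _)
  have hre := congrArg Complex.re hinv
  rw [hf_def] at hre
  simp only [Complex.ofReal_re] at hre
  have h2 : ∫ v : ℝ, (Complex.exp (((2 * π * (v * z) : ℝ) : ℂ) * Complex.I)
        * ((2 * γ / (γ ^ 2 + (2 * π * v) ^ 2) : ℝ) : ℂ)).re
      = (∫ v : ℝ, Complex.exp (((2 * π * (v * z) : ℝ) : ℂ) * Complex.I)
        * ((2 * γ / (γ ^ 2 + (2 * π * v) ^ 2) : ℝ) : ℂ)).re := by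
    simpa using integral_re hGint
  rw [← hre, ← h2]
  apply integral_congr_ae
  filter_upwards with v
  rw [Complex.mul_re]
  simp only [Complex.ofReal_re, Complex.ofReal_im, Complex.exp_ofReal_mul_I_re,
    Complex.exp_ofReal_mul_I_im, mul_zero, sub_zero]
  rw [mul_comm, show 2*π*(v*z) = 2*π*v*z from by ring]

lemma integrable_spectral_cos {γ : ℝ} (hγ : 0 < γ) (z : ℝ) :
    Integrable (fun w : ℝ ↦ 2 * γ / (γ ^ 2 + (2 * π * w) ^ 2) * Real.cos (2 * π * w * z)) := by
  have := (integrable_spectral hγ).bdd_mul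
    (by continuity : Continuous fun w : ℝ ↦ Real.cos (2 * π * w * z)).aestronglyMeasurable
    (c := 1) (ae_of_all _ fun w => by simpa using Real.abs_cos_le_one _)
  exact this.congr (ae_of_all _ fun w => mul_comm _ _)

/-- For `γ₁ > γ₂ > 0` and `0 < Γ ≤ γ₂/γ₁`, the kernel
`J(z) = exp(−γ₁|z|) − Γ exp(−γ₂|z|)` is nonnegative definite. -/
theorem exp_abs_difference_nonneg_definite (γ₁ γ₂ Γ : ℝ) (h21 : γ₂ < γ₁)
    (h2 : 0 < γ₂) (hΓ0 : 0 < Γ) (hΓ : Γ ≤ γ₂ / γ₁) :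
    ∀ (n : ℕ) (x c : Fin n → ℝ),
      0 ≤ ∑ i, ∑ j, c i * c j *
          (Real.exp (-γ₁ * |x i - x j|) - Γ * Real.exp (-γ₂ * |x i - x j|)) := by
  intro n x c
  have hγ1 : 0 < γ₁ := h2.trans h21
  set H : ℝ → ℝ := fun w ↦
    2 * γ₁ / (γ₁ ^ 2 + (2 * π * w) ^ 2) - Γ * (2 * γ₂ / (γ₂ ^ 2 + (2 * π * w) ^ 2)) with hH
  have hHcos : ∀ z : ℝ, Integrable (fun w : ℝ ↦ H w * Real.cos (2 * π * w * z)) := by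
    intro z
    have := (integrable_spectral_cos hγ1 z).sub ((integrable_spectral_cos h2 z).const_mul Γ)
    exact this.congr (ae_of_all _ fun w => by simp only [Pi.sub_apply]; ring)
  have key : ∀ z : ℝ, Real.exp (-γ₁ * |z|) - Γ * Real.exp (-γ₂ * |z|)
      = ∫ w : ℝ, H w * Real.cos (2 * π * w * z) := by
    intro z
    rw [exp_eq_integral_cos hγ1 z, exp_eq_integral_cos h2 z, ← integral_const_mul,
      ← integral_sub (integrable_spectral_cos hγ1 z)
        ((integrable_spectral_cos h2 z).const_mul Γ)]
    apply integral_congr_ae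
    filter_upwards with w
    rw [hH]
    ring
  have hterm : ∀ i j : Fin n, c i * c j *
      (Real.exp (-γ₁ * |x i - x j|) - Γ * Real.exp (-γ₂ * |x i - x j|))
      = ∫ w : ℝ, c i * c j * (H w * Real.cos (2 * π * w * (x i - x j))) := by
    intro i j
    rw [key, ← integral_const_mul]
  calc (0:ℝ) ≤ ∫ w : ℝ, ∑ i, ∑ j,
        c i * c j * (H w * Real.cos (2 * π * w * (x i - x j))) := by
        apply integral_nonneg
        intro w
        show (0:ℝ) ≤ ∑ i, ∑ j, c i * c j * (H w * Real.cos (2 * π * w * (x i - x j)))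
        have hHw : 0 ≤ H w := by
          have hB : Γ * γ₁ ≤ γ₂ := (le_div_iff₀ hγ1).mp hΓ
          have hA : (0:ℝ) ≤ (2 * π * w) ^ 2 := sq_nonneg _
          have d1 : (0:ℝ) < γ₁ ^ 2 + (2 * π * w) ^ 2 := by positivity
          have d2 : (0:ℝ) < γ₂ ^ 2 + (2 * π * w) ^ 2 := by positivity
          rw [hH, sub_nonneg, mul_div_assoc', div_le_div_iff₀ d2 d1]
          nlinarith [mul_nonneg hA (sub_nonneg.2 hB),
            mul_nonneg hA (sub_pos.2 h21).le,
            mul_nonneg (mul_nonneg hΓ0.le hA) (sub_pos.2 h21).le,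
            mul_nonneg (mul_pos h2 hγ1).le (sub_nonneg.2 hB)]
        have hsum : ∑ i, ∑ j, c i * c j * (H w * Real.cos (2 * π * w * (x i - x j)))
            = H w * ((∑ i, c i * Real.cos (2 * π * w * x i)) ^ 2
              + (∑ i, c i * Real.sin (2 * π * w * x i)) ^ 2) := by
          rw [sq, sq, Finset.sum_mul_sum, Finset.sum_mul_sum, ← Finset.sum_add_distrib,
            Finset.mul_sum]
          refine Finset.sum_congr rfl fun i _ => ?_
          rw [← Finset.sum_add_distrib, Finset.mul_sum]
          refine Finset.sum_congr rfl fun j _ => ?_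
          rw [show 2 * π * w * (x i - x j) = 2 * π * w * x i - 2 * π * w * x j from by ring,
            Real.cos_sub]
          ring
        rw [hsum]
        positivity
    _ = ∑ i, ∑ j, c i * c j *
        (Real.exp (-γ₁ * |x i - x j|) - Γ * Real.exp (-γ₂ * |x i - x j|)) := by
        rw [integral_finset_sum _ fun i _ => integrable_finset_sum _ fun j _ =>
          ((hHcos (x i - x j)).const_mul (c i * c j))]
        refine Finset.sum_congr rfl fun i _ => ?_
        rw [integral_finset_sum _ fun j _ => ((hHcos (x i - x j)).const_mul (c i * c j))]
        exact Finset.sum_congr rfl fun j _ => (hterm i j).symm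
end

section
/- The Mexican hat kernel J(z) = (1 − z²)·exp(−z²/2) gives rise to a nonnegative definite kernel: for every n ∈ ℕ, all points x₁, …, xₙ ∈ ℝ and all real coefficients c₁, …, cₙ, one has ∑_{i,j=1}^n c_i·c_j·(1 − (x_i − x_j)²)·exp(−(x_i − x_j)²/2) ≥ 0. -/
open Real

/-- Feature maps: derivatives of the Gaussian feature maps. -/
noncomputable def psiMH (k : ℕ) (x : ℝ) : ℝ :=
  Real.exp (-x^2/2) * ((k : ℝ) * x^(k-1) - x^(k+1)) / Real.sqrt (Nat.factorial k)

noncomputable def GMH (x y : ℝ) (k : ℕ) : ℝ :=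
  ((k : ℝ) * x^(k-1) - x^(k+1)) * ((k : ℝ) * y^(k-1) - y^(k+1)) / (k.factorial : ℝ)

lemma exp_tsum' (u : ℝ) : ∑' n : ℕ, u ^ n / n.factorial = Real.exp u := by
  rw [Real.exp_eq_exp_ℝ, NormedSpace.exp_eq_tsum_div]

lemma sum0 (u : ℝ) : Summable (fun n : ℕ => u ^ n / n.factorial) :=
  Real.summable_pow_div_factorial u

lemma hasSum0 (u : ℝ) : HasSum (fun n : ℕ => u ^ n / n.factorial) (Real.exp u) := by
  have := (sum0 u).hasSum; rwa [exp_tsum'] at this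

lemma sumShift (u : ℝ) : Summable (fun n : ℕ => u ^ (n+1) / (n+1).factorial) :=
  (summable_nat_add_iff 1).mpr (sum0 u)

lemma tsumShift (u : ℝ) : ∑' n : ℕ, u ^ (n+1) / (n+1).factorial = Real.exp u - 1 := by
  have h := Summable.tsum_eq_zero_add (sum0 u)
  rw [exp_tsum'] at h
  simp only [pow_zero, Nat.factorial_zero] at h
  push_cast at h
  linarith [h]

lemma hasSumShift (u : ℝ) :
    HasSum (fun n : ℕ => u ^ (n+1) / (n+1).factorial) (Real.exp u - 1) := by
  have := (sumShift u).hasSum; rwa [tsumShift] at this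

lemma sum1_aux (u : ℝ) : (fun n : ℕ => ((n+1 : ℕ) : ℝ) * u ^ (n+1) / (n+1).factorial)
      = fun n : ℕ => u * (u ^ n / n.factorial) := by
  funext n
  have hf : ((n+1).factorial : ℝ) = (n+1) * n.factorial := by
    push_cast [Nat.factorial_succ]; ring
  have h0 : (n.factorial : ℝ) ≠ 0 := by positivity
  rw [hf]; field_simp; push_cast; ring

lemma sum1 (u : ℝ) : Summable (fun n : ℕ => (n : ℝ) * u ^ n / n.factorial) := by
  apply (summable_nat_add_iff 1).mp
  have h := sum1_aux u
  push_cast at h ⊢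
  rw [h]
  exact (sum0 u).mul_left u

lemma hasSum1 (u : ℝ) :
    HasSum (fun n : ℕ => (n : ℝ) * u ^ n / n.factorial) (u * Real.exp u) := by
  have hs := (sum1 u).hasSum
  have h := Summable.tsum_eq_zero_add (sum1 u)
  simp only [Nat.cast_zero, zero_mul, zero_div, zero_add] at h
  have h2 := sum1_aux u
  push_cast at h2 h ⊢
  rw [h2, tsum_mul_left, exp_tsum'] at h
  rwa [h] at hs

lemma GMH_succ (x y : ℝ) (m : ℕ) :
    GMH x y (m+1) = (((m:ℝ) * (x*y)^m / m.factorial + (x*y)^m / m.factorial)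
      - (x^2 + y^2) * ((x*y)^m / m.factorial))
      + (x*y) * ((x*y)^(m+1) / (m+1).factorial) := by
  unfold GMH
  have hf : ((m+1).factorial : ℝ) = (m+1) * m.factorial := by
    push_cast [Nat.factorial_succ]; ring
  have h0 : (m.factorial : ℝ) ≠ 0 := by positivity
  have h1 : ((m:ℝ)+1) ≠ 0 := by positivity
  simp only [Nat.add_sub_cancel, hf]
  push_cast
  field_simp
  ring

lemma GMH_hasSum_succ (x y : ℝ) :
    HasSum (fun m : ℕ => GMH x y (m+1))
      ((((x*y) * Real.exp (x*y) + Real.exp (x*y))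
        - (x^2 + y^2) * Real.exp (x*y))
        + (x*y) * (Real.exp (x*y) - 1)) := by
  have h : (fun m : ℕ => GMH x y (m+1)) = fun m : ℕ =>
      ((((m:ℝ) * (x*y)^m / (m.factorial : ℝ)) + (x*y)^m / (m.factorial : ℝ))
      - (x^2 + y^2) * ((x*y)^m / (m.factorial : ℝ)))
      + (x*y) * ((x*y)^(m+1) / ((m+1).factorial : ℝ)) := by
    funext m; rw [GMH_succ]
  rw [h]
  exact (((hasSum1 (x*y)).add (hasSum0 (x*y))).sub
    ((hasSum0 (x*y)).mul_left (x^2+y^2))).add ((hasSumShift (x*y)).mul_left (x*y))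

lemma GMH_hasSum (x y : ℝ) :
    HasSum (GMH x y) ((1 - (x-y)^2) * Real.exp (x*y)) := by
  have h := (hasSum_nat_add_iff (f := GMH x y) 1).mp (GMH_hasSum_succ x y)
  have h0 : GMH x y 0 = x * y := by unfold GMH; norm_num
  have he : ((((x*y) * Real.exp (x*y) + Real.exp (x*y))
        - (x^2 + y^2) * Real.exp (x*y))
        + (x*y) * (Real.exp (x*y) - 1)) + ∑ i ∈ Finset.range 1, GMH x y i
      = (1 - (x-y)^2) * Real.exp (x*y) := by
    rw [Finset.sum_range_one, h0]; ring
  rwa [he] at h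

lemma GMH_summable (x y : ℝ) : Summable (GMH x y) :=
  (GMH_hasSum x y).summable

lemma GMH_tsum (x y : ℝ) :
    ∑' k, GMH x y k = (1 - (x-y)^2) * Real.exp (x*y) :=
  (GMH_hasSum x y).tsum_eq

lemma psiMH_mul (x y : ℝ) (k : ℕ) :
    psiMH k x * psiMH k y
      = (Real.exp (-x^2/2) * Real.exp (-y^2/2)) * GMH x y k := by
  unfold psiMH GMH
  have hs : Real.sqrt (k.factorial : ℝ) * Real.sqrt (k.factorial : ℝ)
      = (k.factorial : ℝ) := Real.mul_self_sqrt (by positivity)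
  rw [div_mul_div_comm, hs]
  ring

lemma psiMH_summable (x y : ℝ) : Summable (fun k => psiMH k x * psiMH k y) := by
  have := (GMH_summable x y).mul_left (Real.exp (-x^2/2) * Real.exp (-y^2/2))
  refine this.congr fun k => ?_
  rw [psiMH_mul]

lemma psiMH_tsum (x y : ℝ) :
    ∑' k, psiMH k x * psiMH k y
      = (1 - (x-y)^2) * Real.exp (-(x-y)^2/2) := by
  have h : (fun k => psiMH k x * psiMH k y)
      = fun k => (Real.exp (-x^2/2) * Real.exp (-y^2/2)) * GMH x y k := by
    funext k; exact psiMH_mul x y k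
  have he : Real.exp (-x^2/2) * Real.exp (-y^2/2) * Real.exp (x*y)
      = Real.exp (-(x-y)^2/2) := by
    rw [← Real.exp_add, ← Real.exp_add]; congr 1; ring
  rw [h, tsum_mul_left, GMH_tsum, ← he]
  ring

/-- The Mexican hat kernel `J(z) = (1 − z²) exp(−z²/2)` is nonnegative definite. -/
theorem mexican_hat_nonneg_definite :
    ∀ (n : ℕ) (x c : Fin n → ℝ),
      0 ≤ ∑ i, ∑ j, c i * c j *
          ((1 - (x i - x j) ^ 2) * Real.exp (-(x i - x j) ^ 2 / 2)) := by
  intro n x c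
  have key : ∀ i j : Fin n, c i * c j *
      ((1 - (x i - x j) ^ 2) * Real.exp (-(x i - x j) ^ 2 / 2))
      = ∑' k, (c i * psiMH k (x i)) * (c j * psiMH k (x j)) := by
    intro i j
    rw [show (fun k => (c i * psiMH k (x i)) * (c j * psiMH k (x j)))
        = fun k => (c i * c j) * (psiMH k (x i) * psiMH k (x j)) by funext k; ring]
    rw [tsum_mul_left, psiMH_tsum]
  have hsumm : ∀ i j : Fin n,
      Summable (fun k => (c i * psiMH k (x i)) * (c j * psiMH k (x j))) := by
    intro i j
    have := (psiMH_summable (x i) (x j)).mul_left (c i * c j)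
    refine this.congr fun k => ?_; ring
  calc (0:ℝ) ≤ ∑' k, (∑ i, c i * psiMH k (x i))^2 :=
        tsum_nonneg fun k => sq_nonneg _
    _ = ∑ i, ∑ j, c i * c j *
          ((1 - (x i - x j) ^ 2) * Real.exp (-(x i - x j) ^ 2 / 2)) := by
        have h1 : ∀ k, (∑ i, c i * psiMH k (x i))^2
            = ∑ i, ∑ j, (c i * psiMH k (x i)) * (c j * psiMH k (x j)) := by
          intro k
          rw [sq, Finset.sum_mul_sum]
        simp only [h1]
        rw [Summable.tsum_finsetSum (fun i _ => summable_sum fun j _ => hsumm i j)]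
        refine Finset.sum_congr rfl fun i _ => ?_
        rw [Summable.tsum_finsetSum (fun j _ => hsumm i j)]
        exact Finset.sum_congr rfl fun j _ => (key i j).symm
end

section
/- For every ξ ∈ ℝ, ∫_ℝ (1 − |x|)·exp(−|x|)·cos(ξ·x) dx = 4·ξ²/(1 + ξ²)². In particular, the Fourier transform of the wizard hat kernel J(x) = (1/4)·(1 − |x|)·exp(−|x|) is nonnegative. -/
open MeasureTheory

open Filter Set Real in
lemma wizard_hat_key (a : ℝ) :
    ∫ x in Set.Ioi (0:ℝ), (1 - x) * Real.exp (-x) * Real.cos (a * x)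
      = 2 * a ^ 2 / (1 + a ^ 2) ^ 2 := by
  have hc : (0:ℝ) < 1 + a ^ 2 := by positivity
  have hc' : (1 + a ^ 2 : ℝ) ≠ 0 := hc.ne'
  set P : ℝ := -2 * a ^ 2 / (1 + a ^ 2) ^ 2 with hP
  set Q : ℝ := a * (a ^ 2 - 1) / (1 + a ^ 2) ^ 2 with hQ
  set R : ℝ := 1 / (1 + a ^ 2) with hR
  set S : ℝ := -a / (1 + a ^ 2) with hS
  set F : ℝ → ℝ := fun x =>
    Real.exp (-x) * ((P + R * x) * Real.cos (a * x) + (Q + S * x) * Real.sin (a * x)) with hF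
  -- derivative
  have hderiv : ∀ x : ℝ, HasDerivAt F ((1 - x) * Real.exp (-x) * Real.cos (a * x)) x := by
    intro x
    have he : HasDerivAt (fun x : ℝ => Real.exp (-x)) (-Real.exp (-x)) x := by
      simpa using ((hasDerivAt_id x).neg.exp)
    have hax : HasDerivAt (fun x : ℝ => a * x) a x := by
      simpa using (hasDerivAt_id x).const_mul a
    have hcos : HasDerivAt (fun x : ℝ => Real.cos (a * x)) (-Real.sin (a * x) * a) x :=
      (Real.hasDerivAt_cos (a * x)).comp x hax
    have hsin : HasDerivAt (fun x : ℝ => Real.sin (a * x)) (Real.cos (a * x) * a) x :=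
      (Real.hasDerivAt_sin (a * x)).comp x hax
    have h1 : HasDerivAt (fun x : ℝ => P + R * x) R x := by
      simpa using ((hasDerivAt_id x).const_mul R).const_add P
    have h2 : HasDerivAt (fun x : ℝ => Q + S * x) S x := by
      simpa using ((hasDerivAt_id x).const_mul S).const_add Q
    have hv := (h1.mul hcos).add (h2.mul hsin)
    have hmain := he.mul hv
    refine hmain.congr_deriv ?_
    simp only [Pi.mul_apply, Pi.add_apply]
    rw [hP, hQ, hR, hS]
    field_simp
    ring
  -- tendsto at top
  have htend : Filter.Tendsto F Filter.atTop (nhds 0) := by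
    have hb : Filter.Tendsto
        (fun x : ℝ => (|P| + |Q|) * Real.exp (-x) + (|R| + |S|) * (x ^ 1 * Real.exp (-x)))
        Filter.atTop (nhds ((|P| + |Q|) * 0 + (|R| + |S|) * 0)) :=
      (Real.tendsto_exp_neg_atTop_nhds_zero.const_mul _).add
        ((Real.tendsto_pow_mul_exp_neg_atTop_nhds_zero 1).const_mul _)
    rw [show ((|P| + |Q|) * 0 + (|R| + |S|) * 0 : ℝ) = 0 by ring] at hb
    refine squeeze_zero_norm' ?_ hb
    filter_upwards [Filter.eventually_ge_atTop (0:ℝ)] with x hx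
    have h1 : |Real.cos (a * x)| ≤ 1 := Real.abs_cos_le_one _
    have h2 : |Real.sin (a * x)| ≤ 1 := Real.abs_sin_le_one _
    have e1 : |P + R * x| ≤ |P| + |R| * x := by
      calc |P + R * x| ≤ |P| + |R * x| := abs_add_le _ _
        _ = |P| + |R| * x := by rw [abs_mul, abs_of_nonneg hx]
    have e2 : |Q + S * x| ≤ |Q| + |S| * x := by
      calc |Q + S * x| ≤ |Q| + |S * x| := abs_add_le _ _
        _ = |Q| + |S| * x := by rw [abs_mul, abs_of_nonneg hx]
    have hv : |(P + R * x) * Real.cos (a * x) + (Q + S * x) * Real.sin (a * x)|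
        ≤ (|P| + |Q|) + (|R| + |S|) * x := by
      calc |(P + R * x) * Real.cos (a * x) + (Q + S * x) * Real.sin (a * x)|
          ≤ |(P + R * x) * Real.cos (a * x)| + |(Q + S * x) * Real.sin (a * x)| := abs_add_le _ _
        _ = |P + R * x| * |Real.cos (a * x)| + |Q + S * x| * |Real.sin (a * x)| := by
            rw [abs_mul, abs_mul]
        _ ≤ |P + R * x| * 1 + |Q + S * x| * 1 := by gcongr
        _ ≤ (|P| + |R| * x) + (|Q| + |S| * x) := by rw [mul_one, mul_one]; exact add_le_add e1 e2
        _ = (|P| + |Q|) + (|R| + |S|) * x := by ring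
    have : ‖F x‖ = Real.exp (-x) *
        |(P + R * x) * Real.cos (a * x) + (Q + S * x) * Real.sin (a * x)| := by
      rw [hF]
      simp [Real.norm_eq_abs, abs_mul, abs_of_pos (Real.exp_pos _)]
    rw [this]
    calc Real.exp (-x) * |(P + R * x) * Real.cos (a * x) + (Q + S * x) * Real.sin (a * x)|
        ≤ Real.exp (-x) * ((|P| + |Q|) + (|R| + |S|) * x) := by
          exact mul_le_mul_of_nonneg_left hv (Real.exp_pos _).le
      _ = (|P| + |Q|) * Real.exp (-x) + (|R| + |S|) * (x ^ 1 * Real.exp (-x)) := by ring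
  -- integrability
  have hcont2 : Continuous (fun x : ℝ => (1 - x) * Real.exp (-x) * Real.cos (a * x)) := by
    continuity
  have hint : MeasureTheory.IntegrableOn
      (fun x : ℝ => (1 - x) * Real.exp (-x) * Real.cos (a * x)) (Set.Ioi 0) := by
    refine integrable_of_isBigO_exp_neg (by norm_num : (0:ℝ) < 1/2)
      (hcont2.continuousOn) (Asymptotics.IsBigO.of_bound 1 ?_)
    have ht1 : Filter.Tendsto (fun x : ℝ => Real.exp (-(1/2) * x)) Filter.atTop (nhds 0) := by
      refine Real.tendsto_exp_atBot.comp ?_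
      exact Filter.tendsto_id.const_mul_atTop_of_neg (by norm_num)
    have ht2 : Filter.Tendsto (fun x : ℝ => x * Real.exp (-(1/2) * x)) Filter.atTop (nhds 0) := by
      refine (tendsto_rpow_mul_exp_neg_mul_atTop_nhds_zero 1 (1/2) (by norm_num)).congr' ?_
      filter_upwards [Filter.eventually_gt_atTop (0:ℝ)] with x hx
      rw [Real.rpow_one]
    have ht : Filter.Tendsto (fun x : ℝ => (1 + x) * Real.exp (-(1/2) * x))
        Filter.atTop (nhds 0) := by
      have := ht1.add ht2
      rw [add_zero] at this
      refine this.congr fun x => by ring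
    filter_upwards [ht.eventually (eventually_le_nhds zero_lt_one),
      Filter.eventually_ge_atTop (0:ℝ)] with x h1x hx
    have hsplit : Real.exp (-x) = Real.exp (-(1/2) * x) * Real.exp (-(1/2) * x) := by
      rw [← Real.exp_add]; ring_nf
    have hb1 : ‖(1 - x) * Real.exp (-x) * Real.cos (a * x)‖ ≤ (1 + x) * Real.exp (-x) := by
      rw [Real.norm_eq_abs, abs_mul, abs_mul, abs_of_pos (Real.exp_pos _)]
      have h1 : |1 - x| ≤ 1 + x := by
        rw [abs_le]; constructor <;> linarith
      have h2 : |Real.cos (a * x)| ≤ 1 := Real.abs_cos_le_one _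
      calc |1 - x| * Real.exp (-x) * |Real.cos (a * x)|
          ≤ (1 + x) * Real.exp (-x) * 1 := by
            apply mul_le_mul _ h2 (abs_nonneg _) (by positivity)
            exact mul_le_mul_of_nonneg_right h1 (Real.exp_pos _).le
        _ = (1 + x) * Real.exp (-x) := by ring
    calc ‖(1 - x) * Real.exp (-x) * Real.cos (a * x)‖
        ≤ (1 + x) * Real.exp (-x) := hb1
      _ = ((1 + x) * Real.exp (-(1/2) * x)) * Real.exp (-(1/2) * x) := by rw [hsplit]; ring
      _ ≤ 1 * Real.exp (-(1/2) * x) := by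
          exact mul_le_mul_of_nonneg_right h1x (Real.exp_pos _).le
      _ ≤ 1 * ‖Real.exp (-(1/2) * x)‖ := by
          rw [Real.norm_eq_abs, abs_of_pos (Real.exp_pos _)]
  have hFTC := MeasureTheory.integral_Ioi_of_hasDerivAt_of_tendsto'
    (fun x _ => hderiv x) hint htend
  rw [hFTC]
  have hF0 : F 0 = P := by simp [hF]
  rw [hF0, hP]
  ring

/-- The Fourier (cosine) transform of `x ↦ (1 − |x|) exp(−|x|)` equals
`4ξ²/(1 + ξ²)²`; in particular the Fourier transform of the wizard hat kernel
`J(x) = (1/4)(1 − |x|) exp(−|x|)` is nonnegative. -/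
theorem wizard_hat_fourier_transform (ξ : ℝ) :
    (∫ x : ℝ, (1 - |x|) * Real.exp (-|x|) * Real.cos (ξ * x)
        = 4 * ξ ^ 2 / (1 + ξ ^ 2) ^ 2) ∧
      0 ≤ ∫ x : ℝ, 1 / 4 * (1 - |x|) * Real.exp (-|x|) * Real.cos (ξ * x) := by
  have hc : (0:ℝ) < 1 + ξ ^ 2 := by positivity
  have habs : ∀ x : ℝ, (1 - |x|) * Real.exp (-|x|) * Real.cos (ξ * x)
      = (fun t => (1 - t) * Real.exp (-t) * Real.cos (ξ * t)) |x| := by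
    intro x
    rcases abs_cases x with ⟨h, _⟩ | ⟨h, _⟩
    · simp [h]
    · simp only [h, mul_neg, Real.cos_neg]
  have h1 : (∫ x : ℝ, (1 - |x|) * Real.exp (-|x|) * Real.cos (ξ * x))
      = 2 * ∫ x in Set.Ioi (0:ℝ), (1 - x) * Real.exp (-x) * Real.cos (ξ * x) := by
    simp_rw [habs]
    exact integral_comp_abs (f := fun t => (1 - t) * Real.exp (-t) * Real.cos (ξ * t))
  have hval := wizard_hat_key ξ
  constructor
  · rw [h1, hval]
    field_simp
    ring
  · have h2 : ∀ x : ℝ, 1 / 4 * (1 - |x|) * Real.exp (-|x|) * Real.cos (ξ * x)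
        = 1 / 4 * ((1 - |x|) * Real.exp (-|x|) * Real.cos (ξ * x)) := fun x => by ring
    simp_rw [h2, MeasureTheory.integral_const_mul, h1, hval]
    positivity
end

section
/- The wizard hat kernel J(z) = (1/4)·(1 − |z|)·exp(−|z|) gives rise to a nonnegative definite kernel: for every n ∈ ℕ, all points x₁, …, xₙ ∈ ℝ and all real coefficients c₁, …, cₙ, one has ∑_{i,j=1}^n c_i·c_j·(1/4)·(1 − |x_i − x_j|)·exp(−|x_i − x_j|) ≥ 0. -/
open Real MeasureTheory Set

/-- The "half-wizard" function: `φ(u) = sgn(u) e^{-|u|} / 2`. -/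
noncomputable def wizPhi (u : ℝ) : ℝ := if 0 ≤ u then Real.exp (-u) / 2 else -Real.exp u / 2

lemma wizPhi_measurable : Measurable wizPhi := by
  unfold wizPhi
  exact Measurable.ite measurableSet_Ici ((measurable_id.neg.exp).div_const 2)
    ((measurable_id.exp.neg).div_const 2)

lemma integral_exp_neg_mul_Ioi {k : ℝ} (hk : 0 < k) (c : ℝ) :
    ∫ t in Ioi c, Real.exp (-(k * t)) = Real.exp (-(k * c)) / k := by
  have h := MeasureTheory.integral_comp_mul_left_Ioi (fun x => Real.exp (-x)) c hk
  simp only [smul_eq_mul, integral_exp_neg_Ioi] at h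
  rw [h, inv_mul_eq_div]

lemma integrableOn_exp_neg_mul_Ioi {k : ℝ} (hk : 0 < k) (c : ℝ) :
    IntegrableOn (fun t => Real.exp (-(k * t))) (Ioi c) := by
  simpa [neg_mul] using exp_neg_integrableOn_Ioi c hk

lemma integral_exp_mul_Iic' {k : ℝ} (hk : 0 < k) (c : ℝ) :
    ∫ t in Iic c, Real.exp (k * t) = Real.exp (k * c) / k := by
  have h := integral_comp_neg_Ioi (-c) (fun t => Real.exp (k * t))
  rw [neg_neg] at h
  rw [← h]
  have h2 : ∀ x : ℝ, Real.exp (k * -x) = Real.exp (-(k * x)) := by intro x; ring_nf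
  simp only [h2]
  rw [integral_exp_neg_mul_Ioi hk]
  ring_nf

lemma integrableOn_exp_mul_Iic' {k : ℝ} (hk : 0 < k) (c : ℝ) :
    IntegrableOn (fun t => Real.exp (k * t)) (Iic c) := by
  have h := integrableOn_exp_neg_mul_Ioi hk (-c)
  have A : MeasurableEmbedding fun x : ℝ => -x := measurableEmbedding_neg
  rw [IntegrableOn, ← Measure.map_neg_eq_self (volume : Measure ℝ),
    Measure.restrict_map measurable_neg measurableSet_Ioi] at h
  have h' := A.integrable_map_iff.mp h
  have hpre : (fun x : ℝ => -x) ⁻¹' Ioi (-c) = Iio c := by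
    ext x; simp
  rw [hpre] at h'
  rw [integrableOn_Iic_iff_integrableOn_Iio]
  refine h'.congr (Filter.Eventually.of_forall fun x => ?_)
  simp only [Function.comp]
  ring_nf

/-- Cross-correlation of `wizPhi` with itself gives the wizard hat kernel. -/
lemma wizPhi_corr {a b : ℝ} (hab : b ≤ a) :
    Integrable (fun t => wizPhi (a - t) * wizPhi (b - t)) ∧
    ∫ t : ℝ, wizPhi (a - t) * wizPhi (b - t)
      = 1 / 4 * (1 - (a - b)) * Real.exp (-(a - b)) := by
  set F : ℝ → ℝ := fun t => wizPhi (a - t) * wizPhi (b - t) with hF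
  -- pointwise formulas on three regions
  have e1 : EqOn (fun t => Real.exp (2 * t) * (Real.exp (-(a + b)) / 4)) F (Iic b) := by
    intro t ht
    simp only [mem_Iic] at ht
    have h1 : 0 ≤ a - t := by linarith
    have h2 : 0 ≤ b - t := by linarith
    simp only [hF, wizPhi, if_pos h1, if_pos h2]
    have h3 : Real.exp (2 * t) * Real.exp (-(a + b))
        = Real.exp (-(a - t)) * Real.exp (-(b - t)) := by
      rw [← Real.exp_add, ← Real.exp_add]; congr 1; ring
    linear_combination h3 / 4
  have e2 : EqOn (fun _ : ℝ => -(Real.exp (b - a) / 4)) F (Ioc b a) := by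
    intro t ht
    simp only [mem_Ioc] at ht
    have h1 : 0 ≤ a - t := by linarith
    have h2 : ¬ (0 ≤ b - t) := by simp; linarith
    simp only [hF, wizPhi, if_pos h1, if_neg h2]
    have h3 : Real.exp (b - a) = Real.exp (-(a - t)) * Real.exp (b - t) := by
      rw [← Real.exp_add]; congr 1; ring
    linear_combination -h3 / 4
  have e3 : EqOn (fun t => Real.exp (-(2 * t)) * (Real.exp (a + b) / 4)) F (Ioi a) := by
    intro t ht
    simp only [mem_Ioi] at ht
    have h1 : ¬ (0 ≤ a - t) := by simp; linarith
    have h2 : ¬ (0 ≤ b - t) := by simp; linarith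
    simp only [hF, wizPhi, if_neg h1, if_neg h2]
    have h3 : Real.exp (-(2 * t)) * Real.exp (a + b)
        = Real.exp (a - t) * Real.exp (b - t) := by
      rw [← Real.exp_add, ← Real.exp_add]; congr 1; ring
    linear_combination h3 / 4
  -- integrability on the three regions
  have hI1 : IntegrableOn F (Iic b) :=
    IntegrableOn.congr_fun ((integrableOn_exp_mul_Iic two_pos b).mul_const _) e1
      measurableSet_Iic
  have hI2 : IntegrableOn F (Ioc b a) :=
    IntegrableOn.congr_fun (integrableOn_const measure_Ioc_lt_top.ne) e2
      measurableSet_Ioc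
  have hI3 : IntegrableOn F (Ioi a) :=
    IntegrableOn.congr_fun ((integrableOn_exp_neg_mul_Ioi two_pos a).mul_const _) e3
      measurableSet_Ioi
  have hIoi : IntegrableOn F (Ioi b) := by
    have := hI2.union hI3
    rwa [Ioc_union_Ioi_eq_Ioi hab] at this
  have hInt : Integrable F := by
    rw [← integrableOn_univ, ← Iic_union_Ioi (a := b)]
    exact hI1.union hIoi
  refine ⟨hInt, ?_⟩
  -- compute the integral
  have split1 : (∫ t in Iic b, F t) + (∫ t in Ioi b, F t) = ∫ t, F t :=
    intervalIntegral.integral_Iic_add_Ioi hI1 hIoi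
  have split2 : (∫ t in Ioi b, F t) = (∫ t in Ioc b a, F t) + ∫ t in Ioi a, F t := by
    rw [← setIntegral_union (Ioc_disjoint_Ioi le_rfl) measurableSet_Ioi hI2 hI3,
      Ioc_union_Ioi_eq_Ioi hab]
  have v1 : (∫ t in Iic b, F t) = Real.exp (b - a) / 8 := by
    rw [← setIntegral_congr_fun measurableSet_Iic e1, integral_mul_const,
      integral_exp_mul_Iic two_pos]
    have h3 : Real.exp (2 * b) * Real.exp (-(a + b)) = Real.exp (b - a) := by
      rw [← Real.exp_add]; congr 1; ring
    linear_combination h3 / 8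
  have v2 : (∫ t in Ioc b a, F t) = -((a - b) * (Real.exp (b - a) / 4)) := by
    rw [← setIntegral_congr_fun measurableSet_Ioc e2, setIntegral_const, Real.volume_real_Ioc_of_le hab,
      smul_eq_mul]
    ring
  have v3 : (∫ t in Ioi a, F t) = Real.exp (b - a) / 8 := by
    rw [← setIntegral_congr_fun measurableSet_Ioi e3, integral_mul_const,
      integral_exp_neg_mul_Ioi two_pos]
    have h3 : Real.exp (-(2 * a)) * Real.exp (a + b) = Real.exp (b - a) := by
      rw [← Real.exp_add]; congr 1; ring
    linear_combination h3 / 8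
  rw [← split1, split2, v1, v2, v3, show -(a - b) = b - a by ring]
  ring

lemma wizPhi_corr_integrable (a b : ℝ) :
    Integrable (fun t => wizPhi (a - t) * wizPhi (b - t)) := by
  rcases le_total b a with h | h
  · exact (wizPhi_corr h).1
  · have := (wizPhi_corr h).1
    refine this.congr (Filter.Eventually.of_forall fun t => ?_)
    ring

lemma wizPhi_corr' (a b : ℝ) :
    ∫ t : ℝ, wizPhi (a - t) * wizPhi (b - t)
      = 1 / 4 * (1 - |a - b|) * Real.exp (-|a - b|) := by
  rcases le_total b a with h | h
  · rw [abs_of_nonneg (by linarith : (0:ℝ) ≤ a - b)]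
    exact (wizPhi_corr h).2
  · rw [abs_sub_comm, abs_of_nonneg (by linarith : (0:ℝ) ≤ b - a)]
    have h2 := (wizPhi_corr h).2
    rw [← h2]
    congr 1
    ext t
    ring

/-- The wizard hat kernel `J(z) = (1/4)(1 − |z|) exp(−|z|)` is nonnegative
definite. -/
theorem wizard_hat_nonneg_definite :
    ∀ (n : ℕ) (x c : Fin n → ℝ),
      0 ≤ ∑ i, ∑ j, c i * c j *
          (1 / 4 * (1 - |x i - x j|) * Real.exp (-|x i - x j|)) := by
  intro n x c
  set f : Fin n → ℝ → ℝ := fun i t => c i * wizPhi (x i - t) with hf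
  have hint : ∀ i j : Fin n, Integrable (fun t => f i t * f j t) := by
    intro i j
    have h := ((wizPhi_corr_integrable (x i) (x j)).const_mul (c i * c j))
    refine h.congr (Filter.Eventually.of_forall fun t => ?_)
    simp only [hf]; ring
  have key : ∀ i j : Fin n, (∫ t : ℝ, f i t * f j t)
      = c i * c j * (1 / 4 * (1 - |x i - x j|) * Real.exp (-|x i - x j|)) := by
    intro i j
    have : (fun t : ℝ => f i t * f j t)
        = fun t => (c i * c j) * (wizPhi (x i - t) * wizPhi (x j - t)) := by
      ext t; simp only [hf]; ring
    rw [this, integral_const_mul, wizPhi_corr']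
  calc (0:ℝ) ≤ ∫ t : ℝ, (∑ i, f i t) ^ 2 :=
        integral_nonneg fun t => sq_nonneg _
    _ = ∫ t : ℝ, ∑ i, ∑ j, f i t * f j t := by
        congr 1; ext t; rw [sq, Finset.sum_mul_sum]
    _ = ∑ i, ∑ j, ∫ t : ℝ, f i t * f j t := by
        rw [integral_finset_sum _ fun i _ =>
          integrable_finset_sum _ fun j _ => hint i j]
        exact Finset.sum_congr rfl fun i _ =>
          integral_finset_sum _ fun j _ => hint i j
    _ = ∑ i, ∑ j, c i * c j *
          (1 / 4 * (1 - |x i - x j|) * Real.exp (-|x i - x j|)) := by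
        simp_rw [key]
end

section
/- Let b > 0. Then the kernel J(z) = exp(−b|z|)·(b·sin(|z|) + cos(z)) gives rise to a nonnegative definite kernel: for every n ∈ ℕ, all points x₁, …, xₙ ∈ ℝ and all real coefficients c₁, …, cₙ, one has ∑_{i,j=1}^n c_i·c_j·exp(−b·|x_i − x_j|)·(b·sin(|x_i − x_j|) + cos(x_i − x_j)) ≥ 0. -/
open MeasureTheory Real Set

/-- Feature function: `φ_b(s) = e^{-bs} sin s` for `s ≥ 0`, `0` otherwise. -/
noncomputable def dokPhi (b : ℝ) : ℝ → ℝ :=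
  fun s => if 0 ≤ s then Real.exp (-b * s) * Real.sin s else 0

lemma dokPhi_measurable (b : ℝ) : Measurable (dokPhi b) := by
  unfold dokPhi
  exact Measurable.ite (measurableSet_le measurable_const measurable_id)
    (((measurable_id.const_mul (-b)).exp).mul Real.measurable_sin) measurable_const

lemma dokPhi_abs_le (b : ℝ) (s : ℝ) (hs : 0 ≤ s) : |dokPhi b s| ≤ Real.exp (-b * s) := by
  unfold dokPhi
  rw [if_pos hs, abs_mul, abs_of_pos (Real.exp_pos _)]
  nlinarith [Real.exp_pos (-b * s), abs_nonneg (Real.sin s), Real.abs_sin_le_one s]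

lemma dokPhi_neg (b : ℝ) (s : ℝ) (hs : s < 0) : dokPhi b s = 0 := by
  unfold dokPhi
  rw [if_neg (not_le.mpr hs)]

/-- Integrability of the product of shifted features. -/
lemma dokPhi_prod_integrable (b : ℝ) (hb : 0 < b) (x y : ℝ) :
    Integrable (fun s => dokPhi b (s - x) * dokPhi b (s - y)) := by
  have hdom : Integrable
      (Set.indicator (Set.Ici (max x y)) (fun s => Real.exp (b * (x + y)) * Real.exp (-(2*b) * s))) := by
    rw [integrable_indicator_iff measurableSet_Ici, integrableOn_Ici_iff_integrableOn_Ioi]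
    exact (exp_neg_integrableOn_Ioi (max x y) (by positivity : (0:ℝ) < 2*b)).const_mul _
  refine hdom.mono' ?_ ?_
  · exact (((dokPhi_measurable b).comp (measurable_id.sub_const x)).mul
      ((dokPhi_measurable b).comp (measurable_id.sub_const y))).aestronglyMeasurable
  · filter_upwards with s
    rw [Set.indicator_apply]
    by_cases hs : s ∈ Set.Ici (max x y)
    · rw [if_pos hs]
      have hs' : max x y ≤ s := hs
      have hx : 0 ≤ s - x := by
        have := le_trans (le_max_left x y) hs'; linarith
      have hy : 0 ≤ s - y := by
        have := le_trans (le_max_right x y) hs'; linarith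
      have h1 := dokPhi_abs_le b (s - x) hx
      have h2 := dokPhi_abs_le b (s - y) hy
      have key : Real.exp (-b * (s - x)) * Real.exp (-b * (s - y))
          = Real.exp (b * (x + y)) * Real.exp (-(2*b) * s) := by
        rw [← Real.exp_add, ← Real.exp_add]; ring_nf
      calc ‖dokPhi b (s - x) * dokPhi b (s - y)‖
          = |dokPhi b (s - x)| * |dokPhi b (s - y)| := by rw [norm_mul]; rfl
        _ ≤ Real.exp (-b * (s - x)) * Real.exp (-b * (s - y)) :=
            mul_le_mul h1 h2 (abs_nonneg _) (Real.exp_pos _).le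
        _ = _ := key
    · rw [if_neg hs]
      have hs' : s < max x y := not_le.mp hs
      rcases lt_max_iff.mp hs' with h | h
      · rw [dokPhi_neg b (s - x) (by linarith), zero_mul, norm_zero]
      · rw [dokPhi_neg b (s - y) (by linarith), mul_zero, norm_zero]

/-- The core autocorrelation integral. -/
lemma dokPhi_core (b : ℝ) (hb : 0 < b) (z : ℝ) (hz : 0 ≤ z) :
    ∫ u, dokPhi b u * dokPhi b (u + z)
      = Real.exp (-b * z) * (b * Real.sin z + Real.cos z) / (4 * b * (b^2 + 1)) := by
  have hb' : (b:ℝ) ≠ 0 := ne_of_gt hb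
  have hb1 : (b^2 + 1 : ℝ) ≠ 0 := by positivity
  have hind : (fun u => dokPhi b u * dokPhi b (u + z))
      = Set.indicator (Set.Ioi (0:ℝ))
        (fun u => Real.exp (-b * u) * Real.sin u * (Real.exp (-b * (u + z)) * Real.sin (u + z))) := by
    funext u
    rw [Set.indicator_apply]
    by_cases hu : u ∈ Set.Ioi (0:ℝ)
    · rw [if_pos hu]
      have hu' : (0:ℝ) < u := hu
      unfold dokPhi
      rw [if_pos hu'.le, if_pos (by linarith)]
    · rw [if_neg hu]
      have hu' : u ≤ 0 := not_lt.mp hu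
      rcases lt_or_eq_of_le hu' with h | h
      · rw [dokPhi_neg b u h, zero_mul]
      · subst h
        unfold dokPhi
        simp
  rw [hind, integral_indicator measurableSet_Ioi]
  set K : ℝ := (4 * b * (b^2 + 1))⁻¹ with hKdef
  have hK : (4 * b * (b^2 + 1)) * K = 1 := by
    rw [hKdef, mul_inv_cancel₀ (by positivity : (4 * b * (b^2+1) : ℝ) ≠ 0)]
  set F : ℝ → ℝ := fun u => Real.exp (-b * z) *
    (Real.exp (-(2*b) * u) *
      (K * (b^2 * Real.cos (2*u + z) - b * Real.sin (2*u + z) - (b^2 + 1) * Real.cos z))) with hF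
  have hderiv : ∀ u ∈ Set.Ioi (0:ℝ),
      HasDerivAt F (Real.exp (-b * u) * Real.sin u * (Real.exp (-b * (u + z)) * Real.sin (u + z))) u := by
    intro u _
    have h1 : HasDerivAt (fun u : ℝ => Real.exp (-(2*b) * u)) (Real.exp (-(2*b) * u) * (-(2*b) * 1)) u :=
      ((hasDerivAt_id u).const_mul (-(2*b))).exp
    have h2 : HasDerivAt (fun u : ℝ => 2*u + z) (2 * 1) u :=
      ((hasDerivAt_id u).const_mul (2:ℝ)).add_const z
    have hcos : HasDerivAt (fun u : ℝ => Real.cos (2*u + z)) (-Real.sin (2*u + z) * (2 * 1)) u :=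
      h2.cos
    have hsin : HasDerivAt (fun u : ℝ => Real.sin (2*u + z)) (Real.cos (2*u + z) * (2 * 1)) u :=
      h2.sin
    have hin : HasDerivAt
        (fun u : ℝ => K * (b^2 * Real.cos (2*u + z) - b * Real.sin (2*u + z) - (b^2 + 1) * Real.cos z))
        (K * (b^2 * (-Real.sin (2*u + z) * (2 * 1)) - b * (Real.cos (2*u + z) * (2 * 1)))) u :=
      (((hcos.const_mul (b^2)).sub (hsin.const_mul b)).sub_const ((b^2 + 1) * Real.cos z)).const_mul K
    have hprod := (h1.mul hin).const_mul (Real.exp (-b * z))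
    convert hprod using 1
    case e'_4 => exact rfl
    case e'_5 => exact rfl
    case e'_8 => exact rfl
    have hexp : Real.exp (-b * u) * Real.exp (-b * (u + z))
        = Real.exp (-b * z) * Real.exp (-(2*b) * u) := by
      rw [← Real.exp_add, ← Real.exp_add]; ring_nf
    have hsin2 : Real.sin (2*u + z) = Real.sin u * Real.cos (u + z) + Real.cos u * Real.sin (u + z) := by
      rw [show 2*u + z = u + (u + z) by ring, Real.sin_add]
    have hcos2 : Real.cos (2*u + z) = Real.cos u * Real.cos (u + z) - Real.sin u * Real.sin (u + z) := by
      rw [show 2*u + z = u + (u + z) by ring, Real.cos_add]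
    have hcz : Real.cos z = Real.cos u * Real.cos (u + z) + Real.sin u * Real.sin (u + z) := by
      rw [show z = (u + z) - u by ring, Real.cos_sub]; ring_nf
    rw [hsin2, hcos2, hcz]
    linear_combination (Real.sin u * Real.sin (u + z)) * hexp -
      (Real.exp (-b * z) * Real.exp (-(2*b) * u) * Real.sin u * Real.sin (u + z)) * hK
  have hcont : ContinuousWithinAt F (Set.Ici (0:ℝ)) 0 := by
    apply Continuous.continuousWithinAt
    fun_prop
  have hint : IntegrableOn
      (fun u => Real.exp (-b * u) * Real.sin u * (Real.exp (-b * (u + z)) * Real.sin (u + z)))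
      (Set.Ioi (0:ℝ)) := by
    refine ((exp_neg_integrableOn_Ioi 0 (by positivity : (0:ℝ) < 2*b)).mono' ?_ ?_)
    · exact Continuous.aestronglyMeasurable (by fun_prop)
    · filter_upwards with u
      have hexp : Real.exp (-b * u) * Real.exp (-b * (u + z))
          = Real.exp (-b * z) * Real.exp (-(2*b) * u) := by
        rw [← Real.exp_add, ← Real.exp_add]; ring_nf
      have h1 := Real.abs_sin_le_one u
      have h2 := Real.abs_sin_le_one (u + z)
      have h3 : Real.exp (-b * z) ≤ 1 := by
        rw [Real.exp_le_one_iff]; nlinarith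
      calc ‖Real.exp (-b * u) * Real.sin u * (Real.exp (-b * (u + z)) * Real.sin (u + z))‖
          = (Real.exp (-b * u) * Real.exp (-b * (u + z))) * (|Real.sin u| * |Real.sin (u + z)|) := by
            rw [Real.norm_eq_abs, abs_mul, abs_mul, abs_mul, abs_of_pos (Real.exp_pos _),
              abs_of_pos (Real.exp_pos _)]
            ring
        _ ≤ (Real.exp (-b * u) * Real.exp (-b * (u + z))) * 1 := by
            have hss : |Real.sin u| * |Real.sin (u + z)| ≤ 1 := by
              nlinarith [abs_nonneg (Real.sin u), abs_nonneg (Real.sin (u + z))]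
            have hpos : (0:ℝ) < Real.exp (-b * u) * Real.exp (-b * (u + z)) := by positivity
            nlinarith
        _ = Real.exp (-b * z) * Real.exp (-(2*b) * u) := by rw [mul_one, hexp]
        _ ≤ Real.exp (-(2*b) * u) := by nlinarith [Real.exp_pos (-(2*b) * u)]
  have htend : Filter.Tendsto F Filter.atTop (nhds 0) := by
    have hM : ∀ u : ℝ, ‖F u‖ ≤
        (|K| * (b^2 + b + (b^2 + 1))) * Real.exp (-(2*b) * u) := by
      intro u
      have h3 : Real.exp (-b * z) ≤ 1 := by
        rw [Real.exp_le_one_iff]; nlinarith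
      have hbnd : |b^2 * Real.cos (2*u + z) - b * Real.sin (2*u + z) - (b^2 + 1) * Real.cos z|
          ≤ b^2 + b + (b^2 + 1) := by
        have c1 := Real.abs_cos_le_one (2*u + z)
        have s1 := Real.abs_sin_le_one (2*u + z)
        have c2 := Real.abs_cos_le_one z
        calc |b^2 * Real.cos (2*u + z) - b * Real.sin (2*u + z) - (b^2 + 1) * Real.cos z|
            ≤ |b^2 * Real.cos (2*u + z) - b * Real.sin (2*u + z)| + |(b^2 + 1) * Real.cos z| :=
              abs_sub _ _
          _ ≤ |b^2 * Real.cos (2*u + z)| + |b * Real.sin (2*u + z)| + |(b^2 + 1) * Real.cos z| := by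
              linarith [abs_sub (b^2 * Real.cos (2*u + z)) (b * Real.sin (2*u + z))]
          _ ≤ b^2 + b + (b^2 + 1) := by
              rw [abs_mul, abs_mul, abs_mul, abs_of_pos (by positivity : (0:ℝ) < b^2),
                abs_of_pos hb, abs_of_pos (by positivity : (0:ℝ) < b^2 + 1)]
              nlinarith [abs_nonneg (Real.cos (2*u+z)), abs_nonneg (Real.sin (2*u+z)),
                abs_nonneg (Real.cos z)]
      rw [hF]
      simp only [norm_mul, Real.norm_eq_abs, abs_of_pos (Real.exp_pos (-b * z)),
        abs_of_pos (Real.exp_pos (-(2*b) * u))]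
      calc Real.exp (-b * z) * (Real.exp (-(2*b) * u) *
              (|K| * |b^2 * Real.cos (2*u + z) - b * Real.sin (2*u + z) - (b^2 + 1) * Real.cos z|))
          ≤ 1 * (Real.exp (-(2*b) * u) * (|K| * (b^2 + b + (b^2 + 1)))) := by
            apply mul_le_mul h3 _ (by positivity) zero_le_one
            apply mul_le_mul_of_nonneg_left _ (Real.exp_pos _).le
            exact mul_le_mul_of_nonneg_left hbnd (abs_nonneg K)
        _ = (|K| * (b^2 + b + (b^2 + 1))) * Real.exp (-(2*b) * u) := by ring
    have hexp0 : Filter.Tendsto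
        (fun u : ℝ => (|K| * (b^2 + b + (b^2 + 1))) * Real.exp (-(2*b) * u))
        Filter.atTop (nhds 0) := by
      rw [show (0:ℝ) = (|K| * (b^2 + b + (b^2 + 1))) * 0 by ring]
      apply Filter.Tendsto.const_mul
      have hx : Filter.Tendsto (fun u : ℝ => -(2*b) * u) Filter.atTop Filter.atBot :=
        Filter.Tendsto.const_mul_atTop_of_neg (by linarith) Filter.tendsto_id
      exact Real.tendsto_exp_atBot.comp hx
    exact squeeze_zero_norm hM hexp0
  rw [MeasureTheory.integral_Ioi_of_hasDerivAt_of_tendsto hcont hderiv hint htend]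
  rw [hF]
  simp only [mul_zero, zero_add, Real.exp_zero]
  rw [div_eq_mul_inv, ← hKdef]
  ring

/-- The cross-correlation integral equals the kernel (up to the constant). -/
lemma dokPhi_cross (b : ℝ) (hb : 0 < b) (x y : ℝ) :
    ∫ s, dokPhi b (s - x) * dokPhi b (s - y)
      = Real.exp (-b * |x - y|) * (b * Real.sin |x - y| + Real.cos (x - y))
        / (4 * b * (b^2 + 1)) := by
  have main : ∀ u v : ℝ, v ≤ u →
      ∫ s, dokPhi b (s - u) * dokPhi b (s - v)
        = Real.exp (-b * (u - v)) * (b * Real.sin (u - v) + Real.cos (u - v))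
          / (4 * b * (b^2 + 1)) := by
    intro u v huv
    have h1 : (fun s => dokPhi b (s - u) * dokPhi b (s - v))
        = fun s => (fun t => dokPhi b t * dokPhi b (t + (u - v))) (s - u) := by
      funext s
      simp only []
      congr 2
      ring
    rw [h1, MeasureTheory.integral_sub_right_eq_self (fun t => dokPhi b t * dokPhi b (t + (u - v))) u]
    exact dokPhi_core b hb (u - v) (by linarith)
  rcases le_total y x with h | h
  · rw [main x y h, abs_of_nonneg (by linarith : (0:ℝ) ≤ x - y)]
  · have hcomm : (fun s => dokPhi b (s - x) * dokPhi b (s - y))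
        = (fun s => dokPhi b (s - y) * dokPhi b (s - x)) := by
      funext s; ring
    rw [hcomm, main y x h, abs_sub_comm x y,
      abs_of_nonneg (by linarith : (0:ℝ) ≤ y - x),
      show x - y = -(y - x) by ring, Real.cos_neg]

/-- For `b > 0`, the kernel `J(z) = exp(−b|z|)(b sin|z| + cos z)` is nonnegative
definite. -/
theorem damped_oscillatory_kernel_nonneg_definite (b : ℝ) (hb : 0 < b) :
    ∀ (n : ℕ) (x c : Fin n → ℝ),
      0 ≤ ∑ i, ∑ j, c i * c j *
          (Real.exp (-b * |x i - x j|) *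
            (b * Real.sin |x i - x j| + Real.cos (x i - x j))) := by
  intro n x c
  have hb1 : (0:ℝ) < 4 * b * (b^2 + 1) := by positivity
  have hint : ∀ i j : Fin n, Integrable
      (fun s => (c i * c j) * (dokPhi b (s - x i) * dokPhi b (s - x j))) :=
    fun i j => (dokPhi_prod_integrable b hb (x i) (x j)).const_mul _
  have key : ∑ i, ∑ j, c i * c j *
        (Real.exp (-b * |x i - x j|) * (b * Real.sin |x i - x j| + Real.cos (x i - x j)))
      = (4 * b * (b^2 + 1)) * ∫ s, (∑ i, c i * dokPhi b (s - x i))^2 := by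
    have hsq : (fun s : ℝ => (∑ i, c i * dokPhi b (s - x i))^2)
        = fun s => ∑ i, ∑ j, (c i * c j) * (dokPhi b (s - x i) * dokPhi b (s - x j)) := by
      funext s
      rw [pow_two, Finset.sum_mul_sum]
      refine Finset.sum_congr rfl fun i _ => Finset.sum_congr rfl fun j _ => by ring
    calc ∑ i, ∑ j, c i * c j *
          (Real.exp (-b * |x i - x j|) * (b * Real.sin |x i - x j| + Real.cos (x i - x j)))
        = ∑ i, ∑ j, (4 * b * (b^2 + 1)) *
            ∫ s, (c i * c j) * (dokPhi b (s - x i) * dokPhi b (s - x j)) := by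
          refine Finset.sum_congr rfl fun i _ => Finset.sum_congr rfl fun j _ => ?_
          rw [MeasureTheory.integral_const_mul, dokPhi_cross b hb (x i) (x j)]
          field_simp
      _ = (4 * b * (b^2 + 1)) * ∑ i, ∑ j,
            ∫ s, (c i * c j) * (dokPhi b (s - x i) * dokPhi b (s - x j)) := by
          rw [Finset.mul_sum]
          exact Finset.sum_congr rfl fun i _ => by rw [Finset.mul_sum]
      _ = (4 * b * (b^2 + 1)) * ∫ s, (∑ i, c i * dokPhi b (s - x i))^2 := by
          congr 1
          rw [hsq, MeasureTheory.integral_finset_sum _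
            (fun i _ => MeasureTheory.integrable_finset_sum _ (fun j _ => hint i j))]
          exact Finset.sum_congr rfl fun i _ => by
            rw [MeasureTheory.integral_finset_sum _ (fun j _ => hint i j)]
  rw [key]
  exact mul_nonneg hb1.le (MeasureTheory.integral_nonneg (fun s => sq_nonneg _))
end
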